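/- Let k be an algebraically closed field of characteristic two. The map Φ(v, A) := (v vᵀ + A)·J is a bijection from the exotic nilpotent cone E := {(v, A) : v ∈ k^{2n}, A an alternating 2n×2n matrix over k, A·J nilpotent} onto the nilpotent cone N := {X ∈ Mat(2n, k) : Xᵀ J + J X = 0, X nilpotent} of sp(2n, k), and it satisfies Φ(g v, g A gᵀ) = g · Φ(v, A) · g⁻¹ for every g ∈ Sp(2n, k). Consequently Φ induces a bijection between the set of Sp(2n, k)-orbits on E and the set of Sp(2n, k)-conjugacy orbits on N. -/

import Mathlib

open Matrix

/-- The standard symplectic form matrix `J = [[0, −1ₙ], [1ₙ, 0]]`. -/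
def Jmat (n : ℕ) (R : Type*) [CommRing R] :
    Matrix (Fin n ⊕ Fin n) (Fin n ⊕ Fin n) R :=
  Matrix.fromBlocks 0 (-1) 1 0

open Finset Polynomial

section Helpers
variable {ι : Type*} [Fintype ι] [DecidableEq ι]
variable {R : Type*} [CommRing R]


/-- An involution without fixed points on a finset forces even cardinality. -/
lemma exists_fixed_of_odd (σ : Equiv.Perm ι) (h2 : ∀ x, σ (σ x) = x)
    (s : Finset ι) (hmap : ∀ x ∈ s, σ x ∈ s) (hodd : Odd s.card) :
    ∃ x ∈ s, σ x = x := by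
  by_contra hc
  push_neg at hc
  have h0 : ∑ _x ∈ s, (1 : ZMod 2) = 0 := by
    refine Finset.sum_involution (fun a ha => σ a) (fun a ha => by decide)
      (fun a ha h => hc a ha) (fun a ha => hmap a ha) (fun a ha => h2 a)
  rw [Finset.sum_const, nsmul_eq_mul, mul_one] at h0
  have : (s.card : ZMod 2) = 1 := by
    have := Nat.odd_iff.mp hodd
    rw [← ZMod.natCast_mod s.card 2, this]; rfl
  rw [this] at h0
  exact one_ne_zero h0

lemma int_units_smul_char_two [CharP R 2] (s : ℤˣ) (x : R) : s • x = x := by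
  rcases Int.units_eq_one_or s with h | h <;>
    simp [h, Units.smul_def, CharTwo.neg_eq]

/-- Diagonal entries of the adjugate of an alternating matrix over a
characteristic-two ring vanish, provided the size is even. -/
lemma adjugate_diag_zero [CharP R 2] (M : Matrix ι ι R) (hsym : Mᵀ = M)
    (hdiag : ∀ i, M i i = 0) (heven : Even (Fintype.card ι)) (i : ι) :
    M.adjugate i i = 0 := by
  rw [Matrix.adjugate_apply, Matrix.det_apply]
  set N := M.updateRow i (Pi.single i 1) with hN
  have hNapp : ∀ a b, N a b = if a = i then (Pi.single i 1 : ι → R) b else M a b := by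
    intro a b
    by_cases h : a = i
    · subst h; simp [hN]
    · simp [hN, Matrix.updateRow_ne h, if_neg h]
  simp only [int_units_smul_char_two]
  refine Finset.sum_involution (fun σ _ => σ⁻¹) ?_ ?_ (fun a ha => Finset.mem_univ _)
    (fun a ha => inv_inv a)
  · -- f σ + f σ⁻¹ = 0
    intro σ _
    have key : ∏ j, N (σ⁻¹ j) j = ∏ j, N (σ j) j := by
      have h1 : ∏ j, N (σ⁻¹ j) j = ∏ j, N j (σ j) := by
        rw [← Equiv.prod_comp σ (fun j => N (σ⁻¹ j) j)]
        simp
      rw [h1]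
      by_cases hσi : σ i = i
      · refine Finset.prod_congr rfl fun j _ => ?_
        by_cases hj : j = i
        · subst hj; rw [hσi]
        · have hσj : σ j ≠ i := fun h => hj (by
            have := σ.injective (h.trans hσi.symm); exact this)
          rw [hNapp, hNapp, if_neg hj, if_neg hσj]
          exact (congrFun (congrFun hsym j) (σ j)).symm ▸ (by
            have : Mᵀ j (σ j) = M j (σ j) := by rw [hsym]
            simpa [Matrix.transpose_apply] using this.symm)
      · -- both products vanish
        rw [Finset.prod_eq_zero (Finset.mem_univ i), Finset.prod_eq_zero (Finset.mem_univ (σ⁻¹ i))]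
        · rw [hNapp, show σ (σ⁻¹ i) = i from σ.apply_symm_apply i, if_pos rfl]
          have : σ⁻¹ i ≠ i := fun h => hσi (by
            have := congrArg σ h; rw [show σ (σ⁻¹ i) = i from σ.apply_symm_apply i] at this; exact this.symm)
          exact Pi.single_eq_of_ne this _
        · rw [hNapp, if_pos rfl]
          simp [Pi.single_eq_of_ne hσi]
    rw [key, CharTwo.add_self_eq_zero]
  · -- involutions give zero terms
    intro σ _ hf
    by_contra h
    have hinv : ∀ x, σ (σ x) = x := by
      intro x
      have := congrArg (fun τ : Equiv.Perm ι => τ x) h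
      conv_lhs => rw [← this]
      simp
    apply hf
    by_cases hσi : σ i = i
    · -- find another fixed point
      have hodd : Odd ((Finset.univ.erase i).card) := by
        rw [Finset.card_erase_of_mem (Finset.mem_univ i), Finset.card_univ]
        refine Nat.Even.sub_odd ?_ heven odd_one
        have : 0 < Fintype.card ι := Fintype.card_pos_iff.mpr ⟨i⟩
        omega
      obtain ⟨j, hj, hfix⟩ := exists_fixed_of_odd σ hinv (Finset.univ.erase i)
        (fun x hx => by
          rcases Finset.mem_erase.mp hx with ⟨hxi, -⟩
          refine Finset.mem_erase.mpr ⟨fun h' => hxi ?_, Finset.mem_univ _⟩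
          have := congrArg σ h'  -- σ (σ x) = σ i
          rw [hinv, hσi] at this; exact this) hodd
      have hji : j ≠ i := (Finset.mem_erase.mp hj).1
      refine Finset.prod_eq_zero (Finset.mem_univ j) ?_
      rw [hfix, hNapp, if_neg hji, hdiag]
    · refine Finset.prod_eq_zero (Finset.mem_univ (σ i)) ?_
      rw [hinv, hNapp, if_pos rfl, Pi.single_eq_of_ne hσi]


/-- The quadratic form of an alternating matrix vanishes in characteristic two. -/
lemma quadform_zero [CharP R 2] (B : Matrix ι ι R) (hsym : Bᵀ = B)
    (hdiag : ∀ i, B i i = 0) (v : ι → R) : v ⬝ᵥ (B *ᵥ v) = 0 := by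
  have hexp : v ⬝ᵥ (B *ᵥ v) = ∑ p ∈ Finset.univ ×ˢ Finset.univ,
      v p.1 * (B p.1 p.2 * v p.2) := by
    rw [Finset.sum_product]
    simp [dotProduct, Matrix.mulVec, Finset.mul_sum]
  rw [hexp]
  refine Finset.sum_involution (fun p _ => (p.2, p.1)) ?_ ?_
    (fun a ha => by simp) (fun a ha => rfl)
  · rintro ⟨a, b⟩ -
    by_cases hab : a = b
    · subst hab; simp [hdiag]
    · have : B b a = B a b := by
        have := congrFun (congrFun hsym a) b
        simpa [Matrix.transpose_apply] using this
      simp only [this]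
      rw [show v a * (B a b * v b) + v b * (B a b * v a) =
        (2 : R) * (v a * (B a b * v b)) by ring]
      have h2 : (2 : R) = 0 := by
        have := CharP.cast_eq_zero R 2; exact_mod_cast this
      rw [h2, zero_mul]
  · rintro ⟨a, b⟩ - hf
    intro h
    apply hf
    have hab : b = a := congrArg Prod.fst h
    subst hab
    simp [hdiag]
/-- Rank-one alternating perturbation does not change the determinant of an
invertible alternating matrix over a field of characteristic two. -/
lemma det_add_vecMulVec {K : Type*} [Field K] [CharP K 2] (M : Matrix ι ι K)
    (hsym : Mᵀ = M) (hdiag : ∀ i, M i i = 0) (heven : Even (Fintype.card ι))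
    (hdet : M.det ≠ 0) (v : ι → K) :
    (M + Matrix.vecMulVec v v).det = M.det := by
  have hu : IsUnit M.det := hdet.isUnit
  rw [Matrix.vecMulVec_eq Unit v v, Matrix.det_add_replicateCol_mul_replicateRow hu]
  have hMinv_sym : (M⁻¹)ᵀ = M⁻¹ := by
    rw [Matrix.inv_def, Matrix.transpose_smul, Matrix.adjugate_transpose, hsym]
  have hMinv_diag : ∀ i, M⁻¹ i i = 0 := by
    intro i
    rw [Matrix.inv_def, Matrix.smul_apply, adjugate_diag_zero M hsym hdiag heven, smul_zero]
  have key : v ⬝ᵥ (M⁻¹ *ᵥ v) = 0 := quadform_zero M⁻¹ hMinv_sym hMinv_diag v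
  have : replicateRow Unit v * M⁻¹ * replicateCol Unit v = replicateRow Unit v * replicateCol Unit (M⁻¹ *ᵥ v) := by
    rw [Matrix.replicateCol_mulVec, Matrix.mul_assoc]
  rw [this]
  have : (1 + replicateRow Unit v * replicateCol Unit (M⁻¹ *ᵥ v)).det = 1 + v ⬝ᵥ (M⁻¹ *ᵥ v) := by
    rw [Matrix.det_unique]
    simp [Matrix.replicateRow_mul_replicateCol_apply]
  rw [this, key, add_zero, mul_one]
end Helpers

section JmatLemmas
variable {n : ℕ} {R : Type*} [CommRing R]

lemma Jmat_transpose [CharP R 2] : (Jmat n R)ᵀ = Jmat n R := by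
  ext i j
  rcases i with i | i <;> rcases j with j | j <;>
    simp [Jmat, Matrix.fromBlocks, Matrix.one_apply, CharTwo.neg_eq, eq_comm]

lemma Jmat_mul_self [CharP R 2] : Jmat n R * Jmat n R = 1 := by
  rw [Jmat, Matrix.fromBlocks_multiply]
  ext i j
  rcases i with i | i <;> rcases j with j | j <;>
    simp [Matrix.fromBlocks, Matrix.one_apply, CharTwo.neg_eq]

lemma Jmat_diag (i : Fin n ⊕ Fin n) : Jmat n R i i = 0 := by
  rcases i with i | i <;> simp [Jmat, Matrix.fromBlocks]

lemma Jmat_map {S : Type*} [CommRing S] (f : R →+* S) :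
    (Jmat n R).map f = Jmat n S := by
  ext i j
  rcases i with i | i <;> rcases j with j | j <;>
    simp [Jmat, Matrix.fromBlocks, Matrix.one_apply, apply_ite f]


lemma charmatrix_eq_smul {ιx : Type*} [Fintype ιx] [DecidableEq ιx]
    (M : Matrix ιx ιx R) :
    charmatrix M = (X : R[X]) • (1 : Matrix ιx ιx R[X]) - M.map C := by
  ext i j
  rw [charmatrix_apply]
  by_cases h : i = j <;>
    simp [h, Matrix.one_apply, Matrix.diagonal_apply, Matrix.map_apply]

lemma isNilpotent_iff_charpoly {ιx : Type*} [Fintype ιx] [DecidableEq ιx]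
    {K : Type*} [Field K] (M : Matrix ιx ιx K) :
    IsNilpotent M ↔ M.charpoly = X ^ Fintype.card ιx := by
  constructor
  · intro hM
    have h := Matrix.isNilpotent_charpoly_sub_pow_of_isNilpotent hM
    have := h.eq_zero
    rwa [sub_eq_zero] at this
  · intro h
    refine ⟨Fintype.card ιx, ?_⟩
    have := Matrix.aeval_self_charpoly M
    rw [h] at this
    simpa using this

section CharpolyEq

variable {k : Type*} [Field k] [CharP k 2]

lemma charpoly_factor (S : Matrix (Fin n ⊕ Fin n) (Fin n ⊕ Fin n) k) :
    (S * Jmat n k).charpoly =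
      ((X : k[X]) • Jmat n k[X] - S.map C).det * (Jmat n k[X]).det := by
  rw [Matrix.charpoly, charmatrix_eq_smul, ← Matrix.det_mul]
  congr 1
  have hmap : (S * Jmat n k).map (C : k →+* k[X]) = S.map C * Jmat n k[X] := by
    rw [Matrix.map_mul, Jmat_map]
  rw [hmap, sub_mul, Matrix.smul_mul, Jmat_mul_self]

lemma charpoly_vecMulVec_add (v : Fin n ⊕ Fin n → k)
    (A : Matrix (Fin n ⊕ Fin n) (Fin n ⊕ Fin n) k)
    (hA : Aᵀ = A) (hd : ∀ i, A i i = 0) :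
    ((Matrix.vecMulVec v v + A) * Jmat n k).charpoly = (A * Jmat n k).charpoly := by
  classical
  set Rp := k[X]
  set J' : Matrix (Fin n ⊕ Fin n) (Fin n ⊕ Fin n) Rp := Jmat n Rp with hJ'
  set M₁ : Matrix (Fin n ⊕ Fin n) (Fin n ⊕ Fin n) Rp :=
    (X : Rp) • J' - A.map C with hM₁
  -- alternating properties of M₁
  have hM₁sym : M₁ᵀ = M₁ := by
    rw [hM₁, Matrix.transpose_sub, Matrix.transpose_smul, Jmat_transpose,
      ← Matrix.transpose_map, hA]
  have hM₁diag : ∀ i, M₁ i i = 0 := by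
    intro i
    rw [hM₁, Matrix.sub_apply, Matrix.smul_apply, hJ', Jmat_diag, smul_zero,
      Matrix.map_apply, hd i, map_zero, sub_zero]
  -- the perturbation
  have hmapadd : (Matrix.vecMulVec v v + A).map (C : k →+* Rp)
      = Matrix.vecMulVec (fun i => C (v i)) (fun i => C (v i)) + A.map C := by
    ext i j
    simp [Matrix.map_apply, Matrix.vecMulVec_apply]
  have hsub : (X : Rp) • J' - (Matrix.vecMulVec v v + A).map C
      = M₁ + Matrix.vecMulVec (fun i => C (v i)) (fun i => C (v i)) := by
    rw [hmapadd, hM₁]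
    have hneg : -(Matrix.vecMulVec (fun i => C (v i)) (fun i => C (v i)))
        = Matrix.vecMulVec (fun i => C (v i)) (fun i => C (v i)) := by
      ext i j; simp [CharTwo.neg_eq]
    rw [sub_add_eq_sub_sub_swap, sub_eq_add_neg ((X : Rp) • J' - A.map C), hneg]
  -- nonvanishing of det M₁
  have hfact := charpoly_factor (n := n) (k := k)
  have hdetJ' : IsUnit (J'.det) := by
    have : J'.det * J'.det = 1 := by rw [← Matrix.det_mul, Jmat_mul_self, Matrix.det_one]
    exact IsUnit.of_mul_eq_one _ this
  have hM₁det : M₁.det ≠ 0 := by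
    intro h0
    have := hfact A
    rw [← hM₁] at this
    rw [h0, zero_mul] at this
    exact (Matrix.charpoly_monic (A * Jmat n k)).ne_zero this
  -- pass to the fraction field
  set K := FractionRing Rp
  have hinj : Function.Injective (algebraMap Rp K) := IsFractionRing.injective Rp K
  haveI : CharP K 2 := charP_of_injective_ringHom hinj 2
  set φ := (algebraMap Rp K)
  have heven : Even (Fintype.card (Fin n ⊕ Fin n)) := by
    rw [Fintype.card_sum, Fintype.card_fin]
    exact ⟨n, rfl⟩
  have hdetmain :
      (M₁ + Matrix.vecMulVec (fun i => C (v i)) (fun i => C (v i))).det = M₁.det := by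
    apply hinj
    rw [RingHom.map_det, RingHom.map_det]
    have hmm : (φ.mapMatrix (M₁ + Matrix.vecMulVec (fun i => C (v i)) (fun i => C (v i))))
        = φ.mapMatrix M₁ + Matrix.vecMulVec (fun i => φ (C (v i))) (fun i => φ (C (v i))) := by
      ext i j
      simp [Matrix.map_apply, Matrix.vecMulVec_apply]
    rw [hmm]
    refine det_add_vecMulVec (φ.mapMatrix M₁) ?_ ?_ heven ?_ _
    · show (M₁.map φ)ᵀ = M₁.map φ
      rw [← Matrix.transpose_map, hM₁sym]
    · intro i
      show φ (M₁ i i) = 0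
      rw [hM₁diag i, map_zero]
    · rw [← RingHom.map_det]
      exact fun h => hM₁det (hinj (show φ M₁.det = φ 0 by rw [map_zero]; exact h))
  -- conclude
  rw [hfact, hfact, ← hM₁, hsub, hdetmain]

end CharpolyEq

end JmatLemmas

section Main

open Matrix

variable {n : ℕ} {k : Type*} [Field k] [CharP k 2]

lemma matrix_add_self (B : Matrix (Fin n ⊕ Fin n) (Fin n ⊕ Fin n) k) : B + B = 0 := by
  ext i j; simp [CharTwo.add_self_eq_zero]

lemma vecMulVec_symm (v : Fin n ⊕ Fin n → k) :
    (Matrix.vecMulVec v v)ᵀ = Matrix.vecMulVec v v := by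
  ext i j; simp [Matrix.vecMulVec_apply, mul_comm]

lemma nilp_equiv (v : Fin n ⊕ Fin n → k)
    (A : Matrix (Fin n ⊕ Fin n) (Fin n ⊕ Fin n) k) (hA : Aᵀ = A)
    (hd : ∀ i, A i i = 0) :
    IsNilpotent ((Matrix.vecMulVec v v + A) * Jmat n k) ↔ IsNilpotent (A * Jmat n k) := by
  rw [isNilpotent_iff_charpoly, isNilpotent_iff_charpoly, charpoly_vecMulVec_add v A hA hd]

lemma phi_mem_N (v : Fin n ⊕ Fin n → k)
    (A : Matrix (Fin n ⊕ Fin n) (Fin n ⊕ Fin n) k) (hA : Aᵀ = A)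
    (hd : ∀ i, A i i = 0) (hnil : IsNilpotent (A * Jmat n k)) :
    ((Matrix.vecMulVec v v + A) * Jmat n k)ᵀ * Jmat n k
        + Jmat n k * ((Matrix.vecMulVec v v + A) * Jmat n k) = 0 ∧
      IsNilpotent ((Matrix.vecMulVec v v + A) * Jmat n k) := by
  have hS : (Matrix.vecMulVec v v + A)ᵀ = Matrix.vecMulVec v v + A := by
    rw [Matrix.transpose_add, vecMulVec_symm, hA]
  refine ⟨?_, (nilp_equiv v A hA hd).mpr hnil⟩
  rw [Matrix.transpose_mul, Jmat_transpose, hS, Matrix.mul_assoc]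
  exact matrix_add_self _

lemma phi_equivar (g : Matrix (Fin n ⊕ Fin n) (Fin n ⊕ Fin n) k)
    (hg : g * Jmat n k * gᵀ = Jmat n k) (v : Fin n ⊕ Fin n → k)
    (A : Matrix (Fin n ⊕ Fin n) (Fin n ⊕ Fin n) k) :
    (Matrix.vecMulVec (g.mulVec v) (g.mulVec v) + g * A * gᵀ) * Jmat n k =
      g * ((Matrix.vecMulVec v v + A) * Jmat n k) * g⁻¹ := by
  have hright : g * (Jmat n k * gᵀ * Jmat n k) = 1 := by
    rw [← Matrix.mul_assoc, ← Matrix.mul_assoc, hg, Jmat_mul_self]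
  have hginv : g⁻¹ = Jmat n k * gᵀ * Jmat n k := Matrix.inv_eq_right_inv hright
  have hvmv : Matrix.vecMulVec (g *ᵥ v) (g *ᵥ v) = g * Matrix.vecMulVec v v * gᵀ := by
    rw [Matrix.vecMulVec_eq Unit, Matrix.vecMulVec_eq Unit, Matrix.replicateCol_mulVec,
      Matrix.replicateRow_mulVec, Matrix.transpose_mul, Matrix.transpose_replicateCol]
    simp only [Matrix.mul_assoc]
  have hfac : g * Matrix.vecMulVec v v * gᵀ + g * A * gᵀ
      = g * (Matrix.vecMulVec v v + A) * gᵀ := by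
    rw [Matrix.mul_add, Matrix.add_mul]
  rw [hvmv, hfac, hginv]
  simp only [Matrix.mul_assoc]
  rw [← Matrix.mul_assoc (Jmat n k) (Jmat n k), Jmat_mul_self, Matrix.one_mul]

lemma sq_eq_char_two {x y : k} (h : x * x = y * y) : x = y := by
  have h2 : (2 : k) = 0 := by
    have := CharP.cast_eq_zero k 2; exact_mod_cast this
  have hz : (x + y) * (x + y) = 0 := by
    have : (x + y) * (x + y) = x * x + y * y + 2 * (x * y) := by ring
    rw [this, h, h2, zero_mul, add_zero, ← two_mul, h2, zero_mul]
  have := mul_self_eq_zero.mp hz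
  have hx : x = -y := eq_neg_of_add_eq_zero_left this
  rw [hx, CharTwo.neg_eq]

lemma isNilpotent_conj {X g : Matrix (Fin n ⊕ Fin n) (Fin n ⊕ Fin n) k}
    (hgg : g * g⁻¹ = 1) (hX : IsNilpotent X) : IsNilpotent (g * X * g⁻¹) := by
  obtain ⟨m, hm⟩ := hX
  have hgg' : g⁻¹ * g = 1 := mul_eq_one_comm.mp hgg
  have key : ∀ m : ℕ, (g * X * g⁻¹) ^ (m + 1) = g * X ^ (m + 1) * g⁻¹ := by
    intro m
    induction m with
    | zero => simp
    | succ m ih =>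
      rw [pow_succ, ih, pow_succ X (m + 1)]
      calc g * X ^ (m + 1) * g⁻¹ * (g * X * g⁻¹)
          = g * X ^ (m + 1) * (g⁻¹ * g) * X * g⁻¹ := by
            simp only [Matrix.mul_assoc]
        _ = g * (X ^ (m + 1) * X) * g⁻¹ := by
            rw [hgg', Matrix.mul_one]
            simp only [Matrix.mul_assoc]
  refine ⟨m + 1, ?_⟩
  rw [key m, pow_succ, hm, Matrix.zero_mul, Matrix.mul_zero, Matrix.zero_mul]

lemma gAgT_diag_zero (g : Matrix (Fin n ⊕ Fin n) (Fin n ⊕ Fin n) k)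
    (A : Matrix (Fin n ⊕ Fin n) (Fin n ⊕ Fin n) k) (hA : Aᵀ = A)
    (hd : ∀ i, A i i = 0) (i : Fin n ⊕ Fin n) : (g * A * gᵀ) i i = 0 := by
  have key : (g * A * gᵀ) i i = (fun j => g i j) ⬝ᵥ (A *ᵥ fun j => g i j) := by
    simp only [Matrix.mul_apply, Matrix.transpose_apply, dotProduct, Matrix.mulVec,
      Finset.sum_mul, Finset.mul_sum]
    rw [Finset.sum_comm]
    refine Finset.sum_congr rfl fun l _ => Finset.sum_congr rfl fun j _ => by ring
  rw [key]
  exact quadform_zero A hA hd _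

end Main

section Final

open Matrix

variable {n : ℕ} {k : Type*} [Field k] [CharP k 2]

lemma phi_inj_aux (v w : Fin n ⊕ Fin n → k)
    (A B : Matrix (Fin n ⊕ Fin n) (Fin n ⊕ Fin n) k)
    (hdA : ∀ i, A i i = 0) (hdB : ∀ i, B i i = 0)
    (h : (Matrix.vecMulVec v v + A) * Jmat n k = (Matrix.vecMulVec w w + B) * Jmat n k) :
    v = w ∧ A = B := by
  have hS : Matrix.vecMulVec v v + A = Matrix.vecMulVec w w + B := by
    have h2 := congrArg (fun M => M * Jmat n k) h
    simpa [Matrix.mul_assoc, Jmat_mul_self] using h2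
  have hv : v = w := by
    funext i
    refine sq_eq_char_two ?_
    have := congrFun (congrFun hS i) i
    simpa [Matrix.vecMulVec_apply, hdA i, hdB i] using this
  refine ⟨hv, ?_⟩
  rw [hv] at hS
  exact add_left_cancel hS

lemma phi_surj_aux [IsAlgClosed k] (M : Matrix (Fin n ⊕ Fin n) (Fin n ⊕ Fin n) k)
    (hM : Mᵀ * Jmat n k + Jmat n k * M = 0 ∧ IsNilpotent M) :
    ∃ v : Fin n ⊕ Fin n → k, ∃ A : Matrix (Fin n ⊕ Fin n) (Fin n ⊕ Fin n) k,
      (Aᵀ = A ∧ (∀ i, A i i = 0) ∧ IsNilpotent (A * Jmat n k)) ∧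
      (Matrix.vecMulVec v v + A) * Jmat n k = M := by
  have hSJ : (M * Jmat n k) * Jmat n k = M := by
    rw [Matrix.mul_assoc, Jmat_mul_self, Matrix.mul_one]
  have hMT : Mᵀ * Jmat n k = Jmat n k * M := by
    have h1 : Mᵀ * Jmat n k = -(Jmat n k * M) := eq_neg_of_add_eq_zero_left hM.1
    rw [h1]; ext i j; simp [CharTwo.neg_eq]
  have hMTeq : Mᵀ = Jmat n k * M * Jmat n k := by
    have h2 := congrArg (fun B => B * Jmat n k) hMT
    simpa [Matrix.mul_assoc, Jmat_mul_self] using h2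
  have hSsym : (M * Jmat n k)ᵀ = M * Jmat n k := by
    rw [Matrix.transpose_mul, Jmat_transpose, hMTeq]
    simp only [← Matrix.mul_assoc]
    rw [Jmat_mul_self, Matrix.one_mul]
  set v : Fin n ⊕ Fin n → k := fun i =>
    (IsAlgClosed.exists_pow_nat_eq ((M * Jmat n k) i i) (n := 2) two_pos).choose with hv
  have hvspec : ∀ i, v i ^ 2 = (M * Jmat n k) i i := fun i =>
    (IsAlgClosed.exists_pow_nat_eq ((M * Jmat n k) i i) (n := 2) two_pos).choose_spec
  set A : Matrix (Fin n ⊕ Fin n) (Fin n ⊕ Fin n) k :=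
    M * Jmat n k - Matrix.vecMulVec v v with hA
  have hsum : Matrix.vecMulVec v v + A = M * Jmat n k := by rw [hA]; abel
  have hAT : Aᵀ = A := by
    rw [hA, Matrix.transpose_sub, hSsym, vecMulVec_symm]
  have hAd : ∀ i, A i i = 0 := by
    intro i
    rw [hA, Matrix.sub_apply, Matrix.vecMulVec_apply, ← sq, hvspec i, sub_self]
  have hnilS : IsNilpotent ((Matrix.vecMulVec v v + A) * Jmat n k) := by
    rw [hsum, hSJ]; exact hM.2
  exact ⟨v, A, ⟨hAT, hAd, (nilp_equiv v A hAT hAd).mp hnilS⟩, by rw [hsum, hSJ]⟩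

end Final

/-- The exotic nilpotent cone `E`: pairs `(v, A)` with `A` alternating
(characteristic two convention: `Aᵀ = A` with zero diagonal) and `A·J`
nilpotent. -/
def ExoticCone (n : ℕ) (k : Type*) [Field k] : Type _ :=
  {p : (Fin n ⊕ Fin n → k) × Matrix (Fin n ⊕ Fin n) (Fin n ⊕ Fin n) k //
    p.2ᵀ = p.2 ∧ (∀ i, p.2 i i = 0) ∧ IsNilpotent (p.2 * Jmat n k)}

/-- The nilpotent cone `N` of `sp(2n, k)`: nilpotent matrices `X` with
`Xᵀ J + J X = 0`. -/
def SpNilCone (n : ℕ) (k : Type*) [Field k] : Type _ :=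
  {M : Matrix (Fin n ⊕ Fin n) (Fin n ⊕ Fin n) k //
    Mᵀ * Jmat n k + Jmat n k * M = 0 ∧ IsNilpotent M}

/-- The orbit relation on `E` for the action `g · (v, A) = (g v, g A gᵀ)`. -/
def exoticOrbitRel (n : ℕ) (k : Type*) [Field k] :
    ExoticCone n k → ExoticCone n k → Prop := fun p q =>
  ∃ g : Matrix (Fin n ⊕ Fin n) (Fin n ⊕ Fin n) k,
    g * Jmat n k * gᵀ = Jmat n k ∧
    q.1.1 = g.mulVec p.1.1 ∧ q.1.2 = g * p.1.2 * gᵀ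

/-- The orbit relation on `N` for the conjugation action of `Sp(2n, k)`. -/
def spOrbitRel (n : ℕ) (k : Type*) [Field k] :
    SpNilCone n k → SpNilCone n k → Prop := fun M M' =>
  ∃ g : Matrix (Fin n ⊕ Fin n) (Fin n ⊕ Fin n) k,
    g * Jmat n k * gᵀ = Jmat n k ∧ M'.1 = g * M.1 * g⁻¹

/-- Over an algebraically closed field of characteristic two, the map
`Φ(v, A) = (v vᵀ + A)·J` is a bijection from the exotic nilpotent cone onto
the nilpotent cone of `sp(2n, k)`; it is `Sp(2n, k)`-equivariant
(`Φ(g v, g A gᵀ) = g Φ(v, A) g⁻¹`); and consequently it induces a bijection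
between the sets of orbits. -/
theorem exotic_to_sp_nilcone_bijection {n : ℕ} (hn : 1 ≤ n)
    {k : Type*} [Field k] [IsAlgClosed k] [CharP k 2] :
    Set.BijOn
      (fun p : (Fin n ⊕ Fin n → k) × Matrix (Fin n ⊕ Fin n) (Fin n ⊕ Fin n) k =>
        (Matrix.vecMulVec p.1 p.1 + p.2) * Jmat n k)
      {p | p.2ᵀ = p.2 ∧ (∀ i, p.2 i i = 0) ∧ IsNilpotent (p.2 * Jmat n k)}
      {M | Mᵀ * Jmat n k + Jmat n k * M = 0 ∧ IsNilpotent M} ∧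
    (∀ g : Matrix (Fin n ⊕ Fin n) (Fin n ⊕ Fin n) k,
      g * Jmat n k * gᵀ = Jmat n k →
      ∀ (v : Fin n ⊕ Fin n → k) (A : Matrix (Fin n ⊕ Fin n) (Fin n ⊕ Fin n) k),
        (Matrix.vecMulVec (g.mulVec v) (g.mulVec v) + g * A * gᵀ) * Jmat n k =
          g * ((Matrix.vecMulVec v v + A) * Jmat n k) * g⁻¹) ∧
    ∃ Ψ : Quot (exoticOrbitRel n k) → Quot (spOrbitRel n k),
      Function.Bijective Ψ ∧
      ∀ (p : ExoticCone n k) (q : SpNilCone n k),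
        q.1 = (Matrix.vecMulVec p.1.1 p.1.1 + p.1.2) * Jmat n k →
        Ψ (Quot.mk _ p) = Quot.mk _ q := by
  classical
  -- the subtype-level map and its inverse
  have e2s_mem : ∀ p : ExoticCone n k,
      ((Matrix.vecMulVec p.1.1 p.1.1 + p.1.2) * Jmat n k)ᵀ * Jmat n k
        + Jmat n k * ((Matrix.vecMulVec p.1.1 p.1.1 + p.1.2) * Jmat n k) = 0 ∧
      IsNilpotent ((Matrix.vecMulVec p.1.1 p.1.1 + p.1.2) * Jmat n k) :=
    fun p => phi_mem_N p.1.1 p.1.2 p.2.1 p.2.2.1 p.2.2.2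
  set e2s : ExoticCone n k → SpNilCone n k :=
    fun p => ⟨(Matrix.vecMulVec p.1.1 p.1.1 + p.1.2) * Jmat n k, e2s_mem p⟩ with he2s
  have hsurj' : ∀ q : SpNilCone n k, ∃ p : ExoticCone n k,
      (Matrix.vecMulVec p.1.1 p.1.1 + p.1.2) * Jmat n k = q.1 := by
    intro q
    obtain ⟨v, A, hmem, heq⟩ := phi_surj_aux q.1 q.2
    exact ⟨⟨(v, A), hmem⟩, heq⟩
  choose s2e hs2e using hsurj'
  have hinj' : ∀ p p' : ExoticCone n k,
      (Matrix.vecMulVec p.1.1 p.1.1 + p.1.2) * Jmat n k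
        = (Matrix.vecMulVec p'.1.1 p'.1.1 + p'.1.2) * Jmat n k → p = p' := by
    intro p p' h
    obtain ⟨hv, hA⟩ := phi_inj_aux p.1.1 p'.1.1 p.1.2 p'.1.2 p.2.2.1 p'.2.2.1 h
    exact Subtype.ext (Prod.ext_iff.mpr ⟨hv, hA⟩)
  refine ⟨⟨?_, ?_, ?_⟩, fun g hg v A => phi_equivar g hg v A, ?_⟩
  · -- MapsTo
    intro p hp
    exact phi_mem_N p.1 p.2 hp.1 hp.2.1 hp.2.2
  · -- InjOn
    intro p hp q hq h
    obtain ⟨hv, hA⟩ := phi_inj_aux p.1 q.1 p.2 q.2 hp.2.1 hq.2.1 h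
    exact Prod.ext_iff.mpr ⟨hv, hA⟩
  · -- SurjOn
    intro M hM
    obtain ⟨v, A, hmem, heq⟩ := phi_surj_aux M hM
    exact ⟨(v, A), hmem, heq⟩
  · -- the induced bijection on orbits
    have h₁ : ∀ p p' : ExoticCone n k, exoticOrbitRel n k p p' →
        Quot.mk (spOrbitRel n k) (e2s p) = Quot.mk (spOrbitRel n k) (e2s p') := by
      intro p p' ⟨g, hg, hv, hA⟩
      refine Quot.sound ⟨g, hg, ?_⟩
      show (Matrix.vecMulVec p'.1.1 p'.1.1 + p'.1.2) * Jmat n k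
        = g * ((Matrix.vecMulVec p.1.1 p.1.1 + p.1.2) * Jmat n k) * g⁻¹
      rw [hv, hA]
      exact phi_equivar g hg p.1.1 p.1.2
    have h₂ : ∀ q q' : SpNilCone n k, spOrbitRel n k q q' →
        Quot.mk (exoticOrbitRel n k) (s2e q) = Quot.mk (exoticOrbitRel n k) (s2e q') := by
      intro q q' ⟨g, hg, hM⟩
      have hright : g * (Jmat n k * gᵀ * Jmat n k) = 1 := by
        rw [← Matrix.mul_assoc, ← Matrix.mul_assoc, hg, Jmat_mul_self]
      have hgg : g * g⁻¹ = 1 := by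
        rw [Matrix.inv_eq_right_inv hright]; exact hright
      set p := s2e q with hp
      have hrmem : (g.mulVec p.1.1, g * p.1.2 * gᵀ) ∈
          {r : (Fin n ⊕ Fin n → k) × Matrix (Fin n ⊕ Fin n) (Fin n ⊕ Fin n) k |
            r.2ᵀ = r.2 ∧ (∀ i, r.2 i i = 0) ∧ IsNilpotent (r.2 * Jmat n k)} := by
      -- E-closure under the action
        refine ⟨?_, ?_, ?_⟩
        · show (g * p.1.2 * gᵀ)ᵀ = g * p.1.2 * gᵀ
          rw [Matrix.transpose_mul, Matrix.transpose_mul, Matrix.transpose_transpose,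
            p.2.1, Matrix.mul_assoc]
        · exact fun i => gAgT_diag_zero g p.1.2 p.2.1 p.2.2.1 i
        · have : IsNilpotent ((Matrix.vecMulVec (g.mulVec p.1.1) (g.mulVec p.1.1)
              + g * p.1.2 * gᵀ) * Jmat n k) := by
            rw [phi_equivar g hg p.1.1 p.1.2]
            refine isNilpotent_conj hgg ?_
            rw [hs2e q]
            exact q.2.2
          exact (nilp_equiv (g.mulVec p.1.1) (g * p.1.2 * gᵀ)
            (by rw [Matrix.transpose_mul, Matrix.transpose_mul, Matrix.transpose_transpose,
              p.2.1, Matrix.mul_assoc])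
            (fun i => gAgT_diag_zero g p.1.2 p.2.1 p.2.2.1 i)).mp this
      set r : ExoticCone n k := ⟨(g.mulVec p.1.1, g * p.1.2 * gᵀ), hrmem⟩ with hr
      have hreq : s2e q' = r := by
        apply hinj'
        rw [hs2e q']
        show q'.1 = (Matrix.vecMulVec (g.mulVec p.1.1) (g.mulVec p.1.1)
          + g * p.1.2 * gᵀ) * Jmat n k
        rw [phi_equivar g hg p.1.1 p.1.2, hs2e q, ← hM]
      refine Quot.sound ⟨g, hg, ?_, ?_⟩
      · rw [hreq]
      · rw [hreq]
    refine ⟨Quot.lift (fun p => Quot.mk (spOrbitRel n k) (e2s p)) h₁, ?_, ?_⟩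
    · refine Function.bijective_iff_has_inverse.mpr
        ⟨Quot.lift (fun q => Quot.mk (exoticOrbitRel n k) (s2e q)) h₂, ?_, ?_⟩
      · intro x
        induction x using Quot.ind with
        | _ p =>
          show Quot.mk (exoticOrbitRel n k) (s2e (e2s p)) = Quot.mk (exoticOrbitRel n k) p
          have : s2e (e2s p) = p := by
            apply hinj'
            rw [hs2e (e2s p)]
          rw [this]
      · intro x
        induction x using Quot.ind with
        | _ q =>
          show Quot.mk (spOrbitRel n k) (e2s (s2e q)) = Quot.mk (spOrbitRel n k) q
          have : e2s (s2e q) = q := Subtype.ext (hs2e q)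
          rw [this]
    · intro p q hq
      have : q = e2s p := Subtype.ext (by rw [hq])
      rw [this]
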